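/- Let ν > 0 be such that √ν is irrational and √ν > 1. For each positive integer k, let i_k denote the nearest integer to √ν·k, i.e. the unique positive integer satisfying |√ν·k − i_k| < 1/2. Then the set of positive integers not of the form i_k for some positive integer k, i.e. ℕ* \ {i_k : k ≥ 1}, is infinite. -/
import Mathlib


/-- If `√ν` is irrational with `√ν > 1` and, for each positive integer `k`,
`i k` is the (unique) positive integer with `|√ν·k - i k| < 1/2`, then the set of
positive integers not of the form `i k` for some positive integer `k` is infinite. -/
theorem stmt_2 (ν : ℝ) (hν : 0 < ν) (hirr : Irrational (Real.sqrt ν))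
    (hgt : 1 < Real.sqrt ν) (i : ℕ → ℕ)
    (hi : ∀ k : ℕ, 1 ≤ k → 0 < i k ∧ |Real.sqrt ν * (k : ℝ) - (i k : ℝ)| < 1 / 2) :
    {n : ℕ | 0 < n ∧ ∀ k : ℕ, 1 ≤ k → i k ≠ n}.Infinite := by
  set s := Real.sqrt ν with hs
  have hspos : (0:ℝ) < s := lt_trans one_pos hgt
  by_contra hfin
  rw [Set.not_infinite] at hfin
  obtain ⟨N, hN⟩ := hfin.bddAbove
  obtain ⟨M, hM⟩ := exists_nat_gt (max (N:ℝ) ((s * N + 1/2) / (s - 1)))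
  have hMN : (N:ℝ) < M := lt_of_le_of_lt (le_max_left _ _) hM
  have hMNnat : N < M := by exact_mod_cast hMN
  have hkey : (M:ℝ) + 1/2 < s * ((M:ℝ) - N) := by
    have h2 : (s * N + 1/2) / (s - 1) < M := lt_of_le_of_lt (le_max_right _ _) hM
    have h3 : s * N + 1/2 < (s - 1) * M := by
      rw [div_lt_iff₀ (by linarith)] at h2; linarith
    nlinarith
  -- every n in (N, M] is hit by some k with 1 ≤ k ≤ M - N - 1
  have hsub : Finset.Ioc N M ⊆ (Finset.Icc 1 (M - N - 1)).image i := by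
    intro n hn
    rw [Finset.mem_Ioc] at hn
    have hnpos : 0 < n := lt_of_le_of_lt (Nat.zero_le N) hn.1
    have hnotS : n ∉ {n : ℕ | 0 < n ∧ ∀ k : ℕ, 1 ≤ k → i k ≠ n} := by
      intro hmem
      exact absurd (hN hmem) (not_le.mpr hn.1)
    simp only [Set.mem_setOf_eq, not_and, not_forall] at hnotS
    obtain ⟨k, hk1, hk2⟩ := hnotS hnpos
    push_neg at hk2
    obtain ⟨_, habs⟩ := hi k hk1
    rw [hk2] at habs
    have h1 : s * k - n < 1/2 := lt_of_le_of_lt (le_abs_self _) habs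
    have h2 : s * k < (M:ℝ) + 1/2 := by
      have : (n:ℝ) ≤ M := by exact_mod_cast hn.2
      linarith
    have h3 : (k:ℝ) < (M:ℝ) - N :=
      (mul_lt_mul_iff_right₀ hspos).mp (lt_trans h2 hkey)
    have h4 : (k:ℝ) < ((M - N : ℕ) : ℝ) := by
      rwa [Nat.cast_sub (le_of_lt hMNnat)]
    have h5 : k < M - N := by exact_mod_cast h4
    rw [Finset.mem_image]
    exact ⟨k, Finset.mem_Icc.mpr ⟨hk1, by omega⟩, hk2⟩
  have hcard := Finset.card_le_card hsub
  have h1 := Finset.card_image_le (s := Finset.Icc 1 (M - N - 1)) (f := i)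
  rw [Nat.card_Ioc] at hcard
  rw [Nat.card_Icc] at h1
  omega
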